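/- Let m = (m₁, m₂, m₃) ∈ R^3 be a unit vector not collinear with e₃ (i.e. m₁² + m₂² > 0), and let c > 0. Then for all x ∈ R^3, |m × x|² + c(x₁² + x₂²) ≥ μ |x|², where μ := min( c/2, (m₁² + m₂²) c / (2 m₃² + c) ) > 0. -/
import Mathlib


open Matrix

/-- Sum of squares of the components of a vector in `ℝ³` (the squared Euclidean norm). -/
def sq3 (u : Fin 3 → ℝ) : ℝ := u 0 ^ 2 + u 1 ^ 2 + u 2 ^ 2

/-- For a unit vector `m ∈ ℝ³` not collinear with `e₃` and `c > 0`: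
`|m × x|² + c(x₁² + x₂²) ≥ μ |x|²` with `μ := min(c/2, (m₁²+m₂²)c/(2m₃²+c)) > 0`. -/
theorem stmt6 (m : Fin 3 → ℝ)
    (hm : m 0 ^ 2 + m 1 ^ 2 + m 2 ^ 2 = 1)
    (hnc : m 0 ^ 2 + m 1 ^ 2 > 0)
    (c : ℝ) (hc : 0 < c) :
    0 < min (c / 2) ((m 0 ^ 2 + m 1 ^ 2) * c / (2 * m 2 ^ 2 + c)) ∧
    ∀ x : Fin 3 → ℝ,
      sq3 (crossProduct m x) + c * (x 0 ^ 2 + x 1 ^ 2) ≥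
        min (c / 2) ((m 0 ^ 2 + m 1 ^ 2) * c / (2 * m 2 ^ 2 + c)) * sq3 x := by
  have hD : 0 < 2 * m 2 ^ 2 + c := by positivity
  set a := m 0 with ha
  set b := m 1 with hb
  set d := m 2 with hd
  set s : ℝ := a ^ 2 + b ^ 2 with hs
  set D : ℝ := 2 * d ^ 2 + c with hDdef
  have hspos : 0 < 2 * s := by linarith
  constructor
  · exact lt_min (by linarith) (by positivity)
  · intro x
    simp only [crossProduct, LinearMap.mk₂_apply, sq3, Matrix.cons_val_zero,
      Matrix.cons_val_one, Matrix.head_cons, Matrix.cons_val_two, Matrix.tail_cons]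
    set x0 := x 0; set x1 := x 1; set x2 := x 2
    have h1 : (0:ℝ) ≤ (D * (a * x0 + b * x1) - 2 * s * d * x2) ^ 2 := sq_nonneg _
    have h2 : (0:ℝ) ≤ (2 * s * D + D ^ 2) * (a * x1 - b * x0) ^ 2 := by positivity
    rcases min_cases (c / 2) (s * c / D) with ⟨he, hle⟩ | ⟨he, hle⟩
    · rw [he]
      rw [div_le_div_iff₀ (by norm_num) hD] at hle
      have hsD : (0:ℝ) ≤ c * (2 * s - D) := by nlinarith
      have h3 : (0:ℝ) ≤ s * x2 ^ 2 * (c * (2 * s - D)) := by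
        apply mul_nonneg (by positivity) hsD
      rw [ge_iff_le, ← sub_nonneg]
      have hid : D * (2 * s * ((b * x2 - d * x1) ^ 2 + (d * x0 - a * x2) ^ 2 +
          (a * x1 - b * x0) ^ 2 + c * (x0 ^ 2 + x1 ^ 2) -
          c / 2 * (x0 ^ 2 + x1 ^ 2 + x2 ^ 2))) =
          (D * (a * x0 + b * x1) - 2 * s * d * x2) ^ 2 +
          (2 * s * D + D ^ 2) * (a * x1 - b * x0) ^ 2 +
          s * x2 ^ 2 * (c * (2 * s - D)) := by ring
      have hfin := (mul_nonneg_iff_of_pos_left hD).mp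
        (hid ▸ add_nonneg (add_nonneg h1 h2) h3)
      exact (mul_nonneg_iff_of_pos_left hspos).mp hfin
    · rw [he]
      rw [div_lt_iff₀ hD] at hle
      have h3 : (0:ℝ) ≤ s * (x0 ^ 2 + x1 ^ 2) * (c * D - 2 * s * c) := by
        apply mul_nonneg (by positivity) (by nlinarith)
      rw [ge_iff_le, div_mul_eq_mul_div, div_le_iff₀ hD, ← sub_nonneg]
      have hid : 2 * s * (((b * x2 - d * x1) ^ 2 + (d * x0 - a * x2) ^ 2 +
          (a * x1 - b * x0) ^ 2 + c * (x0 ^ 2 + x1 ^ 2)) * D -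
          s * c * (x0 ^ 2 + x1 ^ 2 + x2 ^ 2)) =
          (D * (a * x0 + b * x1) - 2 * s * d * x2) ^ 2 +
          (2 * s * D + D ^ 2) * (a * x1 - b * x0) ^ 2 +
          s * (x0 ^ 2 + x1 ^ 2) * (c * D - 2 * s * c) := by ring
      exact (mul_nonneg_iff_of_pos_left hspos).mp
        (hid ▸ add_nonneg (add_nonneg h1 h2) h3)
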